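/- Let n ≥ 1, let H = diag(−(2i−1)/2)_{i=1}^n, and for Θ > 0 let D(Θ) = diag(Θ^{−(2i−1)/2})_{i=1}^n. Let F be a symmetric positive definite n×n matrix such that F − FH − HF is also positive definite, and let a₀ > 0. Then for every x ∈ ℝⁿ with x ≠ 0, the equation 2a₀Θ = (D(Θ)F D(Θ)x, x) has a unique solution Θ > 0. -/

import Mathlib

open Matrix

/-- If `F` and `F − FH − HF` are symmetric positive definite and `a₀ > 0`, then for
every `x ≠ 0` the equation `2a₀Θ = (D(Θ)FD(Θ)x, x)` has a unique solution `Θ > 0`,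
where `D(Θ) = diag(Θ^{−(2i−1)/2})`. -/
private lemma coercive16 (n : ℕ) (F : Matrix (Fin n) (Fin n) ℝ) (hF : F.PosDef) :
    ∃ ε > 0, ∀ z : Fin n → ℝ, ε * ∑ i, z i ^ 2 ≤ z ⬝ᵥ (F *ᵥ z) := by
  rcases Nat.eq_zero_or_pos n with h0 | hn
  · subst h0
    exact ⟨1, one_pos, fun z => by simp [dotProduct]⟩
  haveI : Nonempty (Fin n) := Fin.pos_iff_nonempty.mp hn
  set f : EuclideanSpace ℝ (Fin n) → ℝ := fun u => (fun i => u i) ⬝ᵥ (F *ᵥ fun i => u i) with hf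
  have hcont : Continuous f := by
    have : f = fun u => ∑ i, (∑ j, F i j * u j) * u i := by
      funext u; simp [hf, dotProduct, mulVec, mul_comm]
    rw [this]
    fun_prop
  have hsph : (Metric.sphere (0 : EuclideanSpace ℝ (Fin n)) 1).Nonempty :=
    NormedSpace.sphere_nonempty.mpr zero_le_one
  obtain ⟨u₀, hu₀, hmin⟩ := (isCompact_sphere (0 : EuclideanSpace ℝ (Fin n)) 1).exists_isMinOn
    hsph hcont.continuousOn
  have hu₀ne : (fun i => u₀ i) ≠ (0 : Fin n → ℝ) := by
    intro h
    have : u₀ = 0 := by ext i; exact congrFun h i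
    rw [this] at hu₀
    simp at hu₀
  have hε : 0 < f u₀ := by
    have := (posDef_iff_dotProduct_mulVec.mp hF).2 hu₀ne
    simpa [hf] using this
  refine ⟨f u₀, hε, fun z => ?_⟩
  rcases eq_or_ne z 0 with rfl | hz
  · simp [dotProduct]
  · set w : EuclideanSpace ℝ (Fin n) := (WithLp.equiv 2 _).symm z with hw
    have hwz : ∀ i, w i = z i := fun i => rfl
    have hwne : w ≠ 0 := by
      intro h; apply hz; ext i; rw [← hwz i, h]; simp
    have hnw : 0 < ‖w‖ := norm_pos_iff.mpr hwne
    have hmem : (‖w‖⁻¹ • w) ∈ Metric.sphere (0 : EuclideanSpace ℝ (Fin n)) 1 := by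
      simp [norm_smul, abs_inv, abs_norm, inv_mul_cancel₀ hnw.ne']
    have hle : f u₀ ≤ f (‖w‖⁻¹ • w) := hmin hmem
    have hval : f (‖w‖⁻¹ • w) = ‖w‖⁻¹ ^ 2 * f w := by
      simp only [hf]
      have : (fun i => (‖w‖⁻¹ • w) i) = ‖w‖⁻¹ • (fun i => w i) := rfl
      rw [this, smul_dotProduct, mulVec_smul, dotProduct_smul, smul_eq_mul, smul_eq_mul]
      ring
    have hnormsq : ‖w‖ ^ 2 = ∑ i, z i ^ 2 := by
      rw [EuclideanSpace.norm_eq]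
      rw [Real.sq_sqrt (by positivity)]
      simp [hwz, sq_abs]
    have hfw : f w = z ⬝ᵥ (F *ᵥ z) := by simp [hf, hwz]
    have : f u₀ * ‖w‖ ^ 2 ≤ f w := by
      rw [hval] at hle
      have h3 := mul_le_mul_of_nonneg_right hle (by positivity : (0:ℝ) ≤ ‖w‖ ^ 2)
      calc f u₀ * ‖w‖ ^ 2 ≤ ‖w‖⁻¹ ^ 2 * f w * ‖w‖ ^ 2 := h3
        _ = f w := by field_simp
    rw [hnormsq, hfw] at this
    exact this

theorem stmt16 (n : ℕ) (hn : 1 ≤ n)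
    (H : Matrix (Fin n) (Fin n) ℝ)
    (hH : H = Matrix.diagonal fun i : Fin n => -((2 * (i.val : ℝ) + 1) / 2))
    (D : ℝ → Matrix (Fin n) (Fin n) ℝ)
    (hD : ∀ Θ : ℝ, 0 < Θ →
      D Θ = Matrix.diagonal fun i : Fin n => Θ ^ (-((2 * (i.val : ℝ) + 1) / 2)))
    (F : Matrix (Fin n) (Fin n) ℝ) (hF : F.PosDef)
    (hFH : (F - F * H - H * F).PosDef)
    (a₀ : ℝ) (ha₀ : 0 < a₀) :
    ∀ x : Fin n → ℝ, x ≠ 0 →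
      ∃! Θ : ℝ, 0 < Θ ∧ 2 * a₀ * Θ = ((D Θ * F * D Θ) *ᵥ x) ⬝ᵥ x := by
  intro x hx
  set p : Fin n → ℝ := fun i => -((2 * (i.val : ℝ) + 1) / 2) with hp
  have hple : ∀ i, p i ≤ -(1/2) := by
    intro i
    simp only [hp]
    have : (0:ℝ) ≤ (i.val : ℝ) := Nat.cast_nonneg _
    linarith
  set c : Fin n → Fin n → ℝ := fun i j => F i j * x i * x j with hc
  set ψ : ℝ → ℝ := fun Θ => ∑ i, ∑ j, c i j * Θ ^ (p i + p j - 1) with hψ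
  set z : ℝ → (Fin n → ℝ) := fun Θ i => Θ ^ p i * x i with hz
  clear_value z ψ c p
  -- z Θ ≠ 0
  have hzne : ∀ Θ : ℝ, 0 < Θ → z Θ ≠ 0 := by
    intro Θ hΘ h
    apply hx
    ext i
    have := congrFun h i
    simp only [hz, Pi.zero_apply] at this ⊢
    have hpos : 0 < Θ ^ p i := Real.rpow_pos_of_pos hΘ _
    exact (mul_eq_zero.mp this).resolve_left hpos.ne'
  -- quadratic form of F at z Θ
  have hzF : ∀ Θ : ℝ, 0 < Θ → z Θ ⬝ᵥ (F *ᵥ z Θ) = ∑ i, ∑ j, c i j * Θ ^ (p i + p j) := by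
    intro Θ hΘ
    simp only [dotProduct, mulVec, dotProduct, hz, hc]
    refine Finset.sum_congr rfl fun i _ => ?_
    rw [Finset.mul_sum]
    refine Finset.sum_congr rfl fun j _ => ?_
    rw [Real.rpow_add hΘ]
    ring
  -- the matrix expression equals Θ * ψ Θ
  have hform : ∀ Θ : ℝ, 0 < Θ → ((D Θ * F * D Θ) *ᵥ x) ⬝ᵥ x = Θ * ψ Θ := by
    intro Θ hΘ
    have h1 : ((D Θ * F * D Θ) *ᵥ x) ⬝ᵥ x = ∑ i, ∑ j, c i j * Θ ^ (p i + p j) := by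
      rw [hD Θ hΘ]
      simp only [dotProduct, mulVec, Matrix.mul_diagonal, Matrix.diagonal_mul, dotProduct, hc, hp]
      refine Finset.sum_congr rfl fun i _ => ?_
      rw [Finset.sum_mul]
      refine Finset.sum_congr rfl fun j _ => ?_
      rw [Real.rpow_add hΘ]
      ring
    rw [h1, hψ, Finset.mul_sum]
    refine Finset.sum_congr rfl fun i _ => ?_
    rw [Finset.mul_sum]
    refine Finset.sum_congr rfl fun j _ => ?_
    rw [Real.rpow_sub hΘ, Real.rpow_one]
    field_simp
  -- ψ Θ = Θ⁻¹ * quadratic form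
  have hψval : ∀ Θ : ℝ, 0 < Θ → ψ Θ = Θ⁻¹ * (z Θ ⬝ᵥ (F *ᵥ z Θ)) := by
    intro Θ hΘ
    rw [hzF Θ hΘ, hψ, Finset.mul_sum]
    refine Finset.sum_congr rfl fun i _ => ?_
    rw [Finset.mul_sum]
    refine Finset.sum_congr rfl fun j _ => ?_
    rw [Real.rpow_sub hΘ, Real.rpow_one]
    rw [div_eq_mul_inv]
    ring
  -- derivative of ψ
  have hderiv : ∀ Θ : ℝ, 0 < Θ →
      HasDerivAt ψ (∑ i, ∑ j, c i j * ((p i + p j - 1) * Θ ^ (p i + p j - 1 - 1))) Θ := by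
    intro Θ hΘ
    rw [hψ]
    refine HasDerivAt.fun_sum fun i _ => ?_
    refine HasDerivAt.fun_sum fun j _ => ?_
    exact (Real.hasDerivAt_rpow_const (p := p i + p j - 1) (Or.inl hΘ.ne')).const_mul (c i j)
  -- derivative is negative
  have hneg : ∀ Θ : ℝ, 0 < Θ →
      (∑ i, ∑ j, c i j * ((p i + p j - 1) * Θ ^ (p i + p j - 1 - 1))) < 0 := by
    intro Θ hΘ
    have hquad : z Θ ⬝ᵥ ((F - F * H - H * F) *ᵥ z Θ)
        = ∑ i, ∑ j, c i j * (1 - (p i + p j)) * Θ ^ (p i + p j) := by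
      rw [hH]
      simp only [dotProduct, mulVec, dotProduct, Matrix.sub_apply, Matrix.mul_diagonal,
        Matrix.diagonal_mul, hz, hc, hp]
      refine Finset.sum_congr rfl fun i _ => ?_
      rw [Finset.mul_sum]
      refine Finset.sum_congr rfl fun j _ => ?_
      rw [Real.rpow_add hΘ]
      ring
    have hQ : 0 < z Θ ⬝ᵥ ((F - F * H - H * F) *ᵥ z Θ) := by
      have := (posDef_iff_dotProduct_mulVec.mp hFH).2 (hzne Θ hΘ)
      simpa using this
    rw [hquad] at hQ
    have key : (∑ i, ∑ j, c i j * ((p i + p j - 1) * Θ ^ (p i + p j - 1 - 1)))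
        = -(Θ ^ (-2 : ℝ) * ∑ i, ∑ j, c i j * (1 - (p i + p j)) * Θ ^ (p i + p j)) := by
      rw [Finset.mul_sum, ← Finset.sum_neg_distrib]
      refine Finset.sum_congr rfl fun i _ => ?_
      rw [Finset.mul_sum, ← Finset.sum_neg_distrib]
      refine Finset.sum_congr rfl fun j _ => ?_
      rw [show p i + p j - 1 - 1 = p i + p j + (-2 : ℝ) by ring, Real.rpow_add hΘ]
      ring
    rw [key]
    have : 0 < Θ ^ (-2 : ℝ) := Real.rpow_pos_of_pos hΘ _
    nlinarith
  -- continuity of ψ on Ioi 0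
  have hcont : ContinuousOn ψ (Set.Ioi 0) := fun Θ hΘ =>
    (hderiv Θ (Set.mem_Ioi.mp hΘ)).continuousAt.continuousWithinAt
  -- strict antitonicity
  have hanti : StrictAntiOn ψ (Set.Ioi 0) := by
    refine strictAntiOn_of_deriv_neg (convex_Ioi 0) hcont fun Θ hΘ => ?_
    rw [interior_Ioi] at hΘ
    rw [(hderiv Θ hΘ).deriv]
    exact hneg Θ hΘ
  -- coercivity constant
  obtain ⟨ε, hε, hco⟩ := coercive16 n F hF
  obtain ⟨i0, hi0⟩ := Function.ne_iff.mp hx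
  simp only [Pi.zero_apply] at hi0
  set A : ℝ := ε * x i0 ^ 2 with hA
  have hApos : 0 < A := by
    have : x i0 ^ 2 > 0 := by positivity
    positivity
  -- lower bound for small Θ
  have hlow : ∀ Θ : ℝ, 0 < Θ → Θ ≤ 1 → A / Θ ^ 2 ≤ ψ Θ := by
    intro Θ hΘ hΘ1
    rw [hψval Θ hΘ]
    have h1 : ε * ∑ i, z Θ i ^ 2 ≤ z Θ ⬝ᵥ (F *ᵥ z Θ) := hco (z Θ)
    have h2 : (z Θ i0) ^ 2 ≤ ∑ i, z Θ i ^ 2 :=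
      Finset.single_le_sum (f := fun i => z Θ i ^ 2) (fun i _ => sq_nonneg (z Θ i))
        (Finset.mem_univ i0)
    have h3 : Θ⁻¹ * x i0 ^ 2 ≤ (z Θ i0) ^ 2 := by
      simp only [hz]
      rw [mul_pow, ← Real.rpow_natCast (Θ ^ p i0) 2, ← Real.rpow_mul hΘ.le]
      have hexp : Θ ^ (-1 : ℝ) ≤ Θ ^ (p i0 * 2) :=
        Real.rpow_le_rpow_of_exponent_ge hΘ hΘ1 (by have := hple i0; linarith)
      have : Θ ^ (-1 : ℝ) = Θ⁻¹ := by
        rw [Real.rpow_neg hΘ.le, Real.rpow_one]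
      rw [← this]
      exact mul_le_mul_of_nonneg_right hexp (sq_nonneg _)
    have hΘinv : 0 < Θ⁻¹ := inv_pos.mpr hΘ
    calc A / Θ ^ 2 = Θ⁻¹ * (ε * (Θ⁻¹ * x i0 ^ 2)) := by
          rw [hA]; field_simp
      _ ≤ Θ⁻¹ * (ε * (z Θ i0) ^ 2) := by
          apply mul_le_mul_of_nonneg_left _ hΘinv.le
          exact mul_le_mul_of_nonneg_left h3 hε.le
      _ ≤ Θ⁻¹ * (ε * ∑ i, z Θ i ^ 2) := by
          apply mul_le_mul_of_nonneg_left _ hΘinv.le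
          exact mul_le_mul_of_nonneg_left h2 hε.le
      _ ≤ Θ⁻¹ * (z Θ ⬝ᵥ (F *ᵥ z Θ)) := mul_le_mul_of_nonneg_left h1 hΘinv.le
  -- upper bound for large Θ
  set C : ℝ := ∑ i, ∑ j, |c i j| with hC
  have hCnn : 0 ≤ C := Finset.sum_nonneg fun i _ => Finset.sum_nonneg fun j _ => abs_nonneg _
  have hupp : ∀ Θ : ℝ, 1 ≤ Θ → ψ Θ ≤ C / Θ ^ 2 := by
    intro Θ hΘ1
    have hΘ : (0:ℝ) < Θ := lt_of_lt_of_le one_pos hΘ1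
    have : ψ Θ ≤ ∑ i, ∑ j, |c i j| * Θ ^ (-2 : ℝ) := by
      rw [hψ]
      refine Finset.sum_le_sum fun i _ => Finset.sum_le_sum fun j _ => ?_
      have hexp : Θ ^ (p i + p j - 1) ≤ Θ ^ (-2 : ℝ) :=
        Real.rpow_le_rpow_of_exponent_le hΘ1
          (by linarith [hple i, hple j])
      calc c i j * Θ ^ (p i + p j - 1) ≤ |c i j| * Θ ^ (p i + p j - 1) :=
            mul_le_mul_of_nonneg_right (le_abs_self _) (Real.rpow_pos_of_pos hΘ _).le
        _ ≤ |c i j| * Θ ^ (-2 : ℝ) := mul_le_mul_of_nonneg_left hexp (abs_nonneg _)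
    refine this.trans ?_
    have h4 : Θ ^ (-2 : ℝ) = (Θ ^ 2)⁻¹ := by
      rw [show (-2:ℝ) = -((2:ℕ):ℝ) by norm_num, Real.rpow_neg hΘ.le, Real.rpow_natCast]
    simp only [← Finset.sum_mul]
    rw [h4, div_eq_mul_inv]
  -- choose endpoints
  set Θ₁ : ℝ := min 1 (Real.sqrt (A / (4 * a₀))) with hΘ₁def
  have hΘ₁pos : 0 < Θ₁ := lt_min one_pos (Real.sqrt_pos.mpr (by positivity))
  have hΘ₁le1 : Θ₁ ≤ 1 := min_le_left _ _
  have hψΘ₁ : 2 * a₀ < ψ Θ₁ := by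
    have hsq : Θ₁ ^ 2 ≤ A / (4 * a₀) := by
      have h1 : Θ₁ ≤ Real.sqrt (A / (4 * a₀)) := min_le_right _ _
      have := Real.sq_sqrt (by positivity : (0:ℝ) ≤ A / (4 * a₀))
      nlinarith [hΘ₁pos.le]
    have h2 : 2 * a₀ < A / Θ₁ ^ 2 := by
      rw [lt_div_iff₀ (by positivity)]
      have : 4 * a₀ * Θ₁ ^ 2 ≤ A := by
        have := mul_le_mul_of_nonneg_left hsq (by positivity : (0:ℝ) ≤ 4 * a₀)
        rw [mul_div_cancel₀ _ (by positivity : (4 * a₀ : ℝ) ≠ 0)] at this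
        linarith
      nlinarith [sq_nonneg Θ₁, hΘ₁pos]
    exact h2.trans_le (hlow Θ₁ hΘ₁pos hΘ₁le1)
  set Θ₂ : ℝ := max 1 (Real.sqrt (C / a₀ + 1)) with hΘ₂def
  have hΘ₂ge1 : 1 ≤ Θ₂ := le_max_left _ _
  have hΘ₂pos : 0 < Θ₂ := lt_of_lt_of_le one_pos hΘ₂ge1
  have hψΘ₂ : ψ Θ₂ < 2 * a₀ := by
    have hsq : C / a₀ + 1 ≤ Θ₂ ^ 2 := by
      have h1 : Real.sqrt (C / a₀ + 1) ≤ Θ₂ := le_max_right _ _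
      have h2 := Real.sq_sqrt (by positivity : (0:ℝ) ≤ C / a₀ + 1)
      nlinarith [Real.sqrt_nonneg (C / a₀ + 1)]
    have h3 : C / Θ₂ ^ 2 < 2 * a₀ := by
      rw [div_lt_iff₀ (by positivity)]
      have hCa : C ≤ a₀ * (C / a₀ + 1) - a₀ := by
        rw [mul_add, mul_div_cancel₀ _ ha₀.ne']
        linarith
      nlinarith
    exact (hupp Θ₂ hΘ₂ge1).trans_lt h3
  have hΘ₁₂ : Θ₁ ≤ Θ₂ := hΘ₁le1.trans hΘ₂ge1
  -- IVT
  have hIcc : Set.Icc Θ₁ Θ₂ ⊆ Set.Ioi 0 := fun t ht => lt_of_lt_of_le hΘ₁pos ht.1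
  have hmem : 2 * a₀ ∈ Set.Icc (ψ Θ₂) (ψ Θ₁) := ⟨hψΘ₂.le, hψΘ₁.le⟩
  obtain ⟨Θ, hΘmem, hΘeq⟩ := intermediate_value_Icc' hΘ₁₂ (hcont.mono hIcc) hmem
  have hΘpos : 0 < Θ := hIcc hΘmem
  -- conclusion
  refine ⟨Θ, ⟨hΘpos, ?_⟩, ?_⟩
  · rw [hform Θ hΘpos, hΘeq]; ring
  · rintro Θ' ⟨hΘ'pos, heq'⟩
    rw [hform Θ' hΘ'pos] at heq'
    have hψΘ' : ψ Θ' = 2 * a₀ := by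
      have h := mul_left_cancel₀ hΘ'pos.ne'
        (show Θ' * (2 * a₀) = Θ' * ψ Θ' by linarith)
      linarith
    exact hanti.injOn (Set.mem_Ioi.mpr hΘ'pos) (Set.mem_Ioi.mpr hΘpos) (by rw [hψΘ', hΘeq])
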